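/- arXiv:1703.00081 — 2 statements merged into one kernel-verified Lean document; each statement's English description precedes it below -/
import Mathlib

section
/- Let φ₀(z) = (p−1 + b z²)^{−(1+iδ)/(p−1)} for z ∈ ℝ. Then φ₀ is differentiable on ℝ and for every z ∈ ℝ: −(1/2)·z·φ₀'(z) − ((1+iδ)/(p−1))·φ₀(z) + (1+iδ)·|φ₀(z)|^{p−1}·φ₀(z) = 0. -/
open Complex

/-- `x^w := exp(w · log x)` for a positive real base `x` and complex exponent `w`. -/
noncomputable def rcpow (x : ℝ) (w : ℂ) : ℂ := Complex.exp (w * Real.log x)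

/-- The blow-up profile `φ₀(z) = (p−1 + b z²)^{−(1+iδ)/(p−1)}`. -/
noncomputable def phi0 (p δ b : ℝ) (z : ℝ) : ℂ :=
  rcpow (p - 1 + b * z ^ 2) (-(1 + Complex.I * δ) / (p - 1))

lemma phi0_hasDerivAt (p δ b : ℝ) (hp : 1 < p) (hb : 0 ≤ b) (z : ℝ) :
    HasDerivAt (phi0 p δ b)
      (phi0 p δ b z * ((-(1 + Complex.I * δ) / (p - 1)) *
        ((b * (2 * z)) / (p - 1 + b * z ^ 2)))) z := by
  have hA : (0:ℝ) < p - 1 + b * z ^ 2 := by nlinarith [sq_nonneg z, mul_nonneg hb (sq_nonneg z)]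
  have h1 : HasDerivAt (fun x : ℝ => p - 1 + b * x ^ 2) (b * (2 * z)) z := by
    have := ((hasDerivAt_pow 2 z).const_mul b).const_add (p - 1)
    simpa using this
  have h2 : HasDerivAt (fun x : ℝ => Real.log (p - 1 + b * x ^ 2))
      ((b * (2 * z)) / (p - 1 + b * z ^ 2)) z := h1.log (ne_of_gt hA)
  have h3 : HasDerivAt (fun x : ℝ => ((Real.log (p - 1 + b * x ^ 2) : ℝ) : ℂ))
      (((b * (2 * z)) / (p - 1 + b * z ^ 2) : ℝ) : ℂ) z := h2.ofReal_comp
  have h4 := (h3.const_mul (-(1 + Complex.I * δ) / (p - 1))).cexp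
  simp only [phi0, rcpow]
  convert h4 using 1
  congr 2
  push_cast
  ring

/-- in the critical case `δ = √p`, with `b = (p−1)²/(8√(p(p+1)))`,
the profile `φ₀` is differentiable on `ℝ` and satisfies the profile ODE
`−(1/2)·z·φ₀'(z) − ((1+iδ)/(p−1))·φ₀(z) + (1+iδ)·|φ₀(z)|^{p−1}·φ₀(z) = 0`. -/
theorem stmt3 (p δ b : ℝ) (hp : 1 < p) (hδ : δ = Real.sqrt p)
    (hb : b = (p - 1) ^ 2 / (8 * Real.sqrt (p * (p + 1)))) :
    Differentiable ℝ (phi0 p δ b) ∧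
    ∀ z : ℝ,
      -(1 / 2 : ℂ) * (z : ℂ) * deriv (phi0 p δ b) z
        - ((1 + Complex.I * δ) / (p - 1)) * phi0 p δ b z
        + (1 + Complex.I * δ) * ((‖phi0 p δ b z‖ ^ (p - 1) : ℝ) : ℂ) *
            phi0 p δ b z = 0 := by
  have hb0 : 0 ≤ b := by
    rw [hb]
    positivity
  refine ⟨fun z => (phi0_hasDerivAt p δ b hp hb0 z).differentiableAt, fun z => ?_⟩
  have hA : (0:ℝ) < p - 1 + b * z ^ 2 := by nlinarith [mul_nonneg hb0 (sq_nonneg z)]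
  have hp1 : p - 1 ≠ 0 := by linarith
  -- compute |phi0|^(p-1)
  have habs : (‖phi0 p δ b z‖ ^ (p - 1) : ℝ) = (p - 1 + b * z ^ 2)⁻¹ := by
    have hre : ((-(1 + Complex.I * (δ:ℂ)) / ((p:ℂ) - 1)) *
        ((Real.log (p - 1 + b * z ^ 2) : ℝ) : ℂ)).re
        = -(1 / (p - 1)) * Real.log (p - 1 + b * z ^ 2) := by
      have : ((p:ℂ) - 1) = ((p - 1 : ℝ) : ℂ) := by push_cast; ring
      rw [this]
      simp [Complex.div_re, Complex.mul_re, Complex.normSq_apply]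
      field_simp
      ring
    rw [phi0, rcpow, Complex.norm_exp, hre, ← Real.exp_mul]
    have : -(1 / (p - 1)) * Real.log (p - 1 + b * z ^ 2) * (p - 1)
        = -Real.log (p - 1 + b * z ^ 2) := by field_simp
    rw [this, Real.exp_neg, Real.exp_log hA]
  rw [habs, (phi0_hasDerivAt p δ b hp hb0 z).deriv]
  have hAC : ((p:ℂ) - 1 + b * (z:ℂ) ^ 2) ≠ 0 := by
    have : ((p:ℂ) - 1 + b * (z:ℂ) ^ 2) = ((p - 1 + b * z ^ 2 : ℝ) : ℂ) := by push_cast; ring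
    rw [this]
    exact_mod_cast ne_of_gt hA
  have hp1c : ((p:ℂ) - 1) ≠ 0 := by
    have : ((p:ℂ) - 1) = ((p - 1 : ℝ) : ℂ) := by push_cast; ring
    rw [this]; exact_mod_cast hp1
  push_cast
  linear_combination (1 + I * δ) * phi0 p δ b z * (((p:ℂ) - 1)⁻¹ * mul_inv_cancel₀ hAC - ((p:ℂ) - 1 + b * (z:ℂ) ^ 2)⁻¹ * mul_inv_cancel₀ hp1c)
end

section
/- Let 𝓛̃ be the ℝ-linear operator acting on C² functions v : ℝ → ℂ by (𝓛̃v)(y) = v''(y) − (y/2)·v'(y) + (1+iδ)·Re v(y). Then for every m ∈ ℕ: 𝓛̃((1+iδ)·h_m) = (1 − m/2)·(1+iδ)·h_m and 𝓛̃(i·h_m) = −(m/2)·i·h_m, where h_m is viewed as the complex-valued polynomial function y ↦ h_m(y). -/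
open Complex

/-- The `m`-th rescaled Hermite polynomial
`h_m(y) = Σ_{n=0}^{⌊m/2⌋} m!/(n!(m−2n)!)·(−1)^n·y^{m−2n}`. -/
noncomputable def hpoly (m : ℕ) (y : ℝ) : ℝ :=
  ∑ n ∈ Finset.range (m / 2 + 1),
    ((Nat.factorial m : ℝ) / ((Nat.factorial n : ℝ) * (Nat.factorial (m - 2 * n) : ℝ))) *
      (-1 : ℝ) ^ n * y ^ (m - 2 * n)

/-- The ℝ-linear operator `(𝓛̃v)(y) = v''(y) − (y/2)·v'(y) + (1+iδ)·Re v(y)`. -/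
noncomputable def Ltilde (δ : ℝ) (v : ℝ → ℂ) (y : ℝ) : ℂ :=
  deriv (deriv v) y - ((y / 2 : ℝ) : ℂ) * deriv v y + (1 + Complex.I * δ) * ((v y).re : ℂ)

/-- Coefficient of the `n`-th monomial of `hpoly m`. -/
noncomputable def hc (m n : ℕ) : ℝ :=
  ((Nat.factorial m : ℝ) / ((Nat.factorial n : ℝ) * (Nat.factorial (m - 2 * n) : ℝ))) *
    (-1 : ℝ) ^ n

/-- First derivative of `hpoly m`. -/
noncomputable def hp1 (m : ℕ) (y : ℝ) : ℝ :=
  ∑ n ∈ Finset.range (m / 2 + 1), hc m n * (((m - 2 * n : ℕ) : ℝ) * y ^ (m - 2 * n - 1))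

/-- Second derivative of `hpoly m`. -/
noncomputable def hp2 (m : ℕ) (y : ℝ) : ℝ :=
  ∑ n ∈ Finset.range (m / 2 + 1),
    hc m n * (((m - 2 * n : ℕ) : ℝ) * (((m - 2 * n - 1 : ℕ) : ℝ) * y ^ (m - 2 * n - 2)))

lemma hpoly_hasDerivAt (m : ℕ) (y : ℝ) : HasDerivAt (hpoly m) (hp1 m y) y := by
  unfold hpoly hp1
  apply HasDerivAt.fun_sum
  intro n _
  exact (hasDerivAt_pow (m - 2 * n) y).const_mul (hc m n)

lemma hp1_hasDerivAt (m : ℕ) (y : ℝ) : HasDerivAt (hp1 m) (hp2 m y) y := by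
  apply HasDerivAt.fun_sum
  intro n _
  simpa [mul_assoc, Nat.sub_sub, add_assoc] using
    (((hasDerivAt_pow (m - 2 * n - 1) y).const_mul ((m - 2 * n : ℕ) : ℝ)).const_mul (hc m n))

lemma coeff_step (m n : ℕ) (h : 2 * n + 2 ≤ m) :
    hc m n * ((m - 2 * n : ℕ) : ℝ) * ((m - 2 * n - 1 : ℕ) : ℝ)
      = -((n + 1 : ℝ) * hc m (n + 1)) := by
  obtain ⟨k, hk⟩ : ∃ k, m - 2 * n = k + 2 := ⟨m - 2 * n - 2, by omega⟩
  have h2 : m - 2 * (n + 1) = k := by omega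
  unfold hc
  rw [hk, h2]
  have e1 : k + 2 - 1 = k + 1 := by omega
  rw [e1, Nat.factorial_succ (k+1), Nat.factorial_succ k, Nat.factorial_succ n]
  have f1 : (Nat.factorial n : ℝ) ≠ 0 := Nat.cast_ne_zero.2 (Nat.factorial_ne_zero n)
  have f2 : (Nat.factorial k : ℝ) ≠ 0 := Nat.cast_ne_zero.2 (Nat.factorial_ne_zero k)
  have f3 : ((k : ℝ) + 1) ≠ 0 := by positivity
  have f4 : ((k : ℝ) + 2) ≠ 0 := by positivity
  have f5 : ((n : ℝ) + 1) ≠ 0 := by positivity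
  push_cast
  field_simp
  ring

lemma hpoly_eq (m : ℕ) (y : ℝ) :
    hpoly m y = ∑ n ∈ Finset.range (m / 2 + 1), hc m n * y ^ (m - 2 * n) := rfl

/-- The Hermite ODE: `h'' − (y/2)h' + (m/2)h = 0`. -/
lemma key_real (m : ℕ) (y : ℝ) :
    hp2 m y - y / 2 * hp1 m y + (m : ℝ) / 2 * hpoly m y = 0 := by
  have step1 : -(y / 2 * hp1 m y) + (m : ℝ) / 2 * hpoly m y
      = ∑ n ∈ Finset.range (m / 2 + 1), (n : ℝ) * hc m n * y ^ (m - 2 * n) := by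
    rw [hpoly_eq]
    unfold hp1
    rw [Finset.mul_sum, Finset.mul_sum, ← Finset.sum_neg_distrib, ← Finset.sum_add_distrib]
    refine Finset.sum_congr rfl fun n hn => ?_
    have h2n : 2 * n ≤ m := by
      have := Finset.mem_range.1 hn; omega
    by_cases hk : m - 2 * n = 0
    · have hm : (m : ℝ) = 2 * n := by
        have : m = 2 * n := by omega
        exact_mod_cast congrArg (Nat.cast : ℕ → ℝ) this
      rw [hk, hm]
      push_cast
      ring
    · have hp : y ^ (m - 2 * n) = y ^ (m - 2 * n - 1) * y := by
        rw [← pow_succ]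
        congr 1
        omega
      rw [hp, Nat.cast_sub h2n]
      push_cast
      ring
  have step2 : hp2 m y + ∑ n ∈ Finset.range (m / 2 + 1), (n : ℝ) * hc m n * y ^ (m - 2 * n)
      = 0 := by
    unfold hp2
    set N := m / 2 with hN
    have hb : ∀ n, n < N →
        hc m n * (((m - 2 * n : ℕ) : ℝ) * (((m - 2 * n - 1 : ℕ) : ℝ) * y ^ (m - 2 * n - 2)))
          = -(((n + 1 : ℕ) : ℝ) * hc m (n + 1) * y ^ (m - 2 * (n + 1))) := by
      intro n hn
      have h : 2 * n + 2 ≤ m := by omega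
      have he : m - 2 * n - 2 = m - 2 * (n + 1) := by omega
      have := coeff_step m n h
      push_cast
      rw [he]
      linear_combination this * y ^ (m - 2 * (n + 1))
    have hbN : hc m N * (((m - 2 * N : ℕ) : ℝ) * (((m - 2 * N - 1 : ℕ) : ℝ) * y ^ (m - 2 * N - 2)))
        = 0 := by
      have : m - 2 * N = 0 ∨ m - 2 * N = 1 := by omega
      rcases this with h | h <;> rw [h] <;> norm_num
    rw [Finset.sum_range_succ, hbN, add_zero, Finset.sum_range_succ']
    norm_num
    rw [← Finset.sum_add_distrib]
    refine Finset.sum_eq_zero fun n hn => ?_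
    have hn' : n < N := Finset.mem_range.1 hn
    rw [hb n hn']
    push_cast
    ring
  linarith [step1, step2]

lemma deriv1C (K : ℂ) (m : ℕ) :
    deriv (fun t : ℝ => K * ((hpoly m t : ℝ) : ℂ)) = fun s => K * ((hp1 m s : ℝ) : ℂ) := by
  funext s
  exact (((hpoly_hasDerivAt m s).ofReal_comp).const_mul K).deriv

lemma deriv2C (K : ℂ) (m : ℕ) (s : ℝ) :
    deriv (deriv (fun t : ℝ => K * ((hpoly m t : ℝ) : ℂ))) s = K * ((hp2 m s : ℝ) : ℂ) := by
  rw [deriv1C K m]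
  exact (((hp1_hasDerivAt m s).ofReal_comp).const_mul K).deriv

lemma keyC (m : ℕ) (y : ℝ) :
    ((hp2 m y : ℝ) : ℂ) = ((y : ℂ)) / 2 * ((hp1 m y : ℝ) : ℂ)
      - (m : ℂ) / 2 * ((hpoly m y : ℝ) : ℂ) := by
  have h : hp2 m y = y / 2 * hp1 m y - (m : ℝ) / 2 * hpoly m y := by
    have := key_real m y; linarith
  have := congrArg (Complex.ofReal) h
  push_cast at this
  exact this

/-- for every `m`, `𝓛̃((1+iδ)h_m) = (1 − m/2)·(1+iδ)h_m` and
`𝓛̃(i·h_m) = −(m/2)·i·h_m`. -/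
theorem stmt4 (δ : ℝ) (m : ℕ) (y : ℝ) :
    Ltilde δ (fun t => (1 + Complex.I * δ) * ((hpoly m t : ℝ) : ℂ)) y
      = (1 - (m : ℂ) / 2) * ((1 + Complex.I * δ) * ((hpoly m y : ℝ) : ℂ)) ∧
    Ltilde δ (fun t => Complex.I * ((hpoly m t : ℝ) : ℂ)) y
      = -((m : ℂ) / 2) * (Complex.I * ((hpoly m y : ℝ) : ℂ)) := by
  constructor
  · unfold Ltilde
    rw [deriv2C, deriv1C]
    have hre : ((((1 + Complex.I * δ) * ((hpoly m y : ℝ) : ℂ)).re : ℝ) : ℂ)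
        = ((hpoly m y : ℝ) : ℂ) := by simp
    simp only [hre, keyC]
    push_cast
    ring
  · unfold Ltilde
    rw [deriv2C, deriv1C]
    have hre : (((Complex.I * ((hpoly m y : ℝ) : ℂ)).re : ℝ) : ℂ) = 0 := by simp
    simp only [hre, keyC]
    push_cast
    ring
end
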